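/- Let n = n_1 + n_2. In the group algebra of the braid group 𝔅_n, the total symmetrization element factorizes as Σ_n = (Σ_{τ ∈ 𝔖_{n_1} × 𝔖_{n_2}} T_τ) · (Σ_{σ ∈ 𝔖_{n_1,n_2}} T_σ), where T is the Matsumoto section. Consequently, for any braided vector space (W, σ̃) and any x ∈ W^{⊗n}, if Σ_{σ ∈ 𝔖_{n_1,n_2}} T_σ(x) = 0 then Σ_{ω ∈ 𝔖_n} T_ω(x) = 0; in particular, for the quantum shuffle algebras one has ker S_1 ⊆ ker S_2, and the multiplication induces a surjective linear map S_σ̃(W)_{(1)} ⊗_{S_σ(V)} S_σ̃(W)_{(1)} → S_σ̃(W)_{(2)}. -/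

import Mathlib

/-!
STATEMENT 14: Let `n = n₁ + n₂`.  In the group algebra of the braid group `𝔅_n`,
the total symmetrization element factorizes as
`Σ_n = (Σ_{τ ∈ 𝔖_{n₁} × 𝔖_{n₂}} T_τ) · (Σ_{σ ∈ 𝔖_{n₁,n₂}} T_σ)`, where `T` is the
Matsumoto section.  Consequently, for any braided vector space `(W, σ̃)` (i.e. any
representation `ρ` of `𝔅_n` on `W^{⊗n}`) and any `x`, if
`Σ_{σ ∈ 𝔖_{n₁,n₂}} T_σ(x) = 0` then `Σ_{ω ∈ 𝔖_n} T_ω(x) = 0`; in particular for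
the quantum shuffle algebras `ker S₁ ⊆ ker S₂` and the multiplication induces a
surjective linear map `S_σ̃(W)_{(1)} ⊗_{S_σ(V)} S_σ̃(W)_{(1)} → S_σ̃(W)_{(2)}`
(rendered here as the induced surjection from the image of the component-wise
symmetrizer `S₁` onto the image of the total symmetrizer `S₂`).
-/

noncomputable section

namespace Stmt14

/-- The braid relations on `m` generators `σ_1, …, σ_m`. -/
def braidRels (m : ℕ) : Set (FreeGroup (Fin m)) :=
  {r | (∃ i j : Fin m, (i : ℕ) + 1 < (j : ℕ) ∧
        r = .of i * .of j * (.of i)⁻¹ * (.of j)⁻¹) ∨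
       (∃ i j : Fin m, (i : ℕ) + 1 = (j : ℕ) ∧
        r = .of i * .of j * .of i * (.of j)⁻¹ * (.of i)⁻¹ * (.of j)⁻¹)}

/-- The braid group `𝔅_{m+1}` on `m` generators. -/
def BraidGroup (m : ℕ) := PresentedGroup (braidRels m)

instance (m : ℕ) : Group (BraidGroup m) := inferInstanceAs (Group (PresentedGroup (braidRels m)))

/-- The number of inversions (the length) of a permutation. -/
def invCount {n : ℕ} (ω : Equiv.Perm (Fin n)) : ℕ :=
  (Finset.univ.filter fun p : Fin n × Fin n => p.1 < p.2 ∧ ω p.2 < ω p.1).card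

theorem Equiv.Perm.apply_inv_self {α : Type*} (f : Equiv.Perm α) (x : α) : f (f⁻¹ x) = x :=
  (Equiv.eq_symm_apply f).mp rfl

section Aux

open Finset
open scoped Classical

variable {n n1 : ℕ}

/-- increasing on positions within each block -/
def IsShuffle (n1 : ℕ) {n : ℕ} (σ : Equiv.Perm (Fin n)) : Prop :=
  (∀ i j : Fin n, (i : ℕ) < (j : ℕ) → (j : ℕ) < n1 → ((σ i : Fin n) : ℕ) < ((σ j : Fin n) : ℕ)) ∧
  (∀ i j : Fin n, (i : ℕ) < (j : ℕ) → n1 ≤ (i : ℕ) → ((σ i : Fin n) : ℕ) < ((σ j : Fin n) : ℕ))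

/-- preserves the two blocks -/
def IsBlock (n1 : ℕ) {n : ℕ} (τ : Equiv.Perm (Fin n)) : Prop :=
  ∀ i : Fin n, ((τ i : ℕ) < n1 ↔ (i : ℕ) < n1)

lemma IsBlock.inv {τ : Equiv.Perm (Fin n)} (h : IsBlock n1 τ) : IsBlock n1 τ⁻¹ := by
  intro i
  have h2 := h (τ⁻¹ i)
  rw [Equiv.Perm.apply_inv_self] at h2
  exact h2.symm

lemma invCount_inv (ω : Equiv.Perm (Fin n)) : invCount ω⁻¹ = invCount ω := by
  unfold invCount
  apply Finset.card_nbij' (i := fun p : Fin n × Fin n => (ω⁻¹ p.2, ω⁻¹ p.1))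
    (j := fun p : Fin n × Fin n => (ω p.2, ω p.1))
  · intro p hp
    simp only [Finset.mem_coe, mem_filter, mem_univ, true_and] at hp ⊢
    exact ⟨hp.2, by simpa using hp.1⟩
  · intro p hp
    simp only [Finset.mem_coe, mem_filter, mem_univ, true_and] at hp ⊢
    exact ⟨hp.2, by simpa using hp.1⟩
  · intro p _
    simp
  · intro p _
    simp

lemma card_block1 (hn1 : n1 ≤ n) :
    ((univ : Finset (Fin n)).filter fun q : Fin n => (q : ℕ) < n1).card = n1 := by
  have h : ((univ : Finset (Fin n)).filter fun q : Fin n => (q : ℕ) < n1)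
      = (univ : Finset (Fin n1)).map (Fin.castLEEmb hn1) := by
    ext q
    simp only [mem_filter, mem_univ, true_and, mem_map]
    constructor
    · intro hq
      exact ⟨⟨(q : ℕ), hq⟩, by simp [Fin.castLEEmb, Fin.ext_iff]⟩
    · rintro ⟨a, _, rfl⟩
      simpa [Fin.castLEEmb] using a.isLt
  rw [h, card_map, card_univ, Fintype.card_fin]

lemma card_block2 (hn1 : n1 ≤ n) :
    ((univ : Finset (Fin n)).filter fun q : Fin n => n1 ≤ (q : ℕ)).card = n - n1 := by
  have h := Finset.card_filter_add_card_filter_not (s := (univ : Finset (Fin n)))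
    (p := fun q : Fin n => (q : ℕ) < n1)
  rw [card_block1 hn1, card_univ, Fintype.card_fin] at h
  have he : ((univ : Finset (Fin n)).filter fun q : Fin n => ¬ (q : ℕ) < n1)
      = ((univ : Finset (Fin n)).filter fun q : Fin n => n1 ≤ (q : ℕ)) := by
    apply Finset.filter_congr
    intro q _
    simp [not_lt]
  rw [he] at h
  omega

end Aux
section Aux2

open Finset
open scoped Classical

variable {n n1 : ℕ}

lemma exists_decomp (hn1 : n1 ≤ n) (ω : Equiv.Perm (Fin n)) :
    ∃ σ τ : Equiv.Perm (Fin n), IsShuffle n1 σ ∧ IsBlock n1 τ ∧ ω = σ * τ := by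
  set r : Fin n → ℕ := fun p =>
    if (p : ℕ) < n1 then
      ((univ : Finset (Fin n)).filter fun q : Fin n => (q : ℕ) < n1 ∧ ((ω q : Fin n) : ℕ) < ((ω p : Fin n) : ℕ)).card
    else n1 +
      ((univ : Finset (Fin n)).filter fun q : Fin n => n1 ≤ (q : ℕ) ∧ ((ω q : Fin n) : ℕ) < ((ω p : Fin n) : ℕ)).card
    with hrdef
  have hb1 : ∀ p : Fin n, (p : ℕ) < n1 → r p < n1 := by
    intro p hp
    have hsubset : ((univ : Finset (Fin n)).filter fun q : Fin n => (q : ℕ) < n1 ∧ ((ω q : Fin n) : ℕ) < ((ω p : Fin n) : ℕ))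
        ⊆ ((univ : Finset (Fin n)).filter fun q : Fin n => (q : ℕ) < n1) := by
      intro q hq
      simp only [mem_filter, mem_univ, true_and] at hq ⊢
      exact hq.1
    have hsub := (Finset.ssubset_iff_of_subset hsubset).mpr ⟨p, by simp [hp], by simp⟩
    have := Finset.card_lt_card hsub
    rw [card_block1 hn1] at this
    simpa [hrdef, hp] using this
  have hb2 : ∀ p : Fin n, n1 ≤ (p : ℕ) → n1 ≤ r p ∧ r p < n := by
    intro p hp
    have hsubset : ((univ : Finset (Fin n)).filter fun q : Fin n => n1 ≤ (q : ℕ) ∧ ((ω q : Fin n) : ℕ) < ((ω p : Fin n) : ℕ))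
        ⊆ ((univ : Finset (Fin n)).filter fun q : Fin n => n1 ≤ (q : ℕ)) := by
      intro q hq
      simp only [mem_filter, mem_univ, true_and] at hq ⊢
      exact hq.1
    have hsub := (Finset.ssubset_iff_of_subset hsubset).mpr ⟨p, by simp [hp], by simp⟩
    have hc := Finset.card_lt_card hsub
    rw [card_block2 hn1] at hc
    have hnl : ¬ (p : ℕ) < n1 := not_lt.mpr hp
    constructor
    · simp only [hrdef, if_neg hnl]
      omega
    · simp only [hrdef, if_neg hnl]
      have := p.isLt
      omega
  have hrlt : ∀ p : Fin n, r p < n := by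
    intro p
    by_cases hp : (p : ℕ) < n1
    · exact lt_of_lt_of_le (hb1 p hp) hn1
    · exact (hb2 p (le_of_not_gt hp)).2
  have hmono1 : ∀ p p' : Fin n, (p : ℕ) < n1 → (p' : ℕ) < n1 →
      ((ω p : Fin n) : ℕ) < ((ω p' : Fin n) : ℕ) → r p < r p' := by
    intro p p' hp hp' hlt
    have hsubset : ((univ : Finset (Fin n)).filter fun q : Fin n => (q : ℕ) < n1 ∧ ((ω q : Fin n) : ℕ) < ((ω p : Fin n) : ℕ))
        ⊆ ((univ : Finset (Fin n)).filter fun q : Fin n => (q : ℕ) < n1 ∧ ((ω q : Fin n) : ℕ) < ((ω p' : Fin n) : ℕ)) := by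
      intro q hq
      simp only [mem_filter, mem_univ, true_and] at hq ⊢
      exact ⟨hq.1, hq.2.trans hlt⟩
    have hsub := (Finset.ssubset_iff_of_subset hsubset).mpr ⟨p, by simp only [mem_filter, mem_univ, true_and]; exact ⟨hp, hlt⟩, by simp⟩
    have := Finset.card_lt_card hsub
    simpa [hrdef, hp, hp'] using this
  have hmono2 : ∀ p p' : Fin n, n1 ≤ (p : ℕ) → n1 ≤ (p' : ℕ) →
      ((ω p : Fin n) : ℕ) < ((ω p' : Fin n) : ℕ) → r p < r p' := by
    intro p p' hp hp' hlt
    have hsubset : ((univ : Finset (Fin n)).filter fun q : Fin n => n1 ≤ (q : ℕ) ∧ ((ω q : Fin n) : ℕ) < ((ω p : Fin n) : ℕ))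
        ⊆ ((univ : Finset (Fin n)).filter fun q : Fin n => n1 ≤ (q : ℕ) ∧ ((ω q : Fin n) : ℕ) < ((ω p' : Fin n) : ℕ)) := by
      intro q hq
      simp only [mem_filter, mem_univ, true_and] at hq ⊢
      exact ⟨hq.1, hq.2.trans hlt⟩
    have hsub := (Finset.ssubset_iff_of_subset hsubset).mpr ⟨p, by simp only [mem_filter, mem_univ, true_and]; exact ⟨hp, hlt⟩, by simp⟩
    have := Finset.card_lt_card hsub
    simp only [hrdef, if_neg (not_lt.mpr hp), if_neg (not_lt.mpr hp')]
    omega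
  set τ0 : Fin n → Fin n := fun p => ⟨r p, hrlt p⟩ with hτ0def
  have hτblock : ∀ p : Fin n, ((τ0 p : Fin n) : ℕ) < n1 ↔ (p : ℕ) < n1 := by
    intro p
    constructor
    · intro h
      by_contra hp
      have := (hb2 p (le_of_not_gt hp)).1
      simp only [hτ0def] at h
      omega
    · intro hp
      simpa [hτ0def] using hb1 p hp
  have hinj : Function.Injective τ0 := by
    intro p p' h
    have hr' : r p = r p' := congrArg Fin.val h
    by_cases h1 : (p : ℕ) < n1 <;> by_cases h2 : (p' : ℕ) < n1
    · rcases lt_trichotomy ((ω p : Fin n) : ℕ) ((ω p' : Fin n) : ℕ) with hc | hc | hc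
      · have := hmono1 p p' h1 h2 hc; omega
      · exact ω.injective (Fin.ext hc)
      · have := hmono1 p' p h2 h1 hc; omega
    · have ha := hb1 p h1
      have hbb := (hb2 p' (le_of_not_gt h2)).1
      omega
    · have ha := hb1 p' h2
      have hbb := (hb2 p (le_of_not_gt h1)).1
      omega
    · rcases lt_trichotomy ((ω p : Fin n) : ℕ) ((ω p' : Fin n) : ℕ) with hc | hc | hc
      · have := hmono2 p p' (le_of_not_gt h1) (le_of_not_gt h2) hc; omega
      · exact ω.injective (Fin.ext hc)
      · have := hmono2 p' p (le_of_not_gt h2) (le_of_not_gt h1) hc; omega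
  set τ : Equiv.Perm (Fin n) := Equiv.ofBijective τ0 (Finite.injective_iff_bijective.mp hinj)
    with hτdef
  have hτapp : ∀ p : Fin n, τ p = τ0 p := fun p => rfl
  have hτinvblock : ∀ q : Fin n, ((τ⁻¹ q : Fin n) : ℕ) < n1 ↔ (q : ℕ) < n1 := by
    intro q
    have h := hτblock (τ⁻¹ q)
    rw [← hτapp, Equiv.Perm.apply_inv_self] at h
    exact h.symm
  have hrinv : ∀ q : Fin n, r (τ⁻¹ q) = (q : ℕ) := by
    intro q
    have h : τ (τ⁻¹ q) = q := Equiv.Perm.apply_inv_self τ q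
    rw [hτapp] at h
    exact congrArg Fin.val h
  have hinvinj : ∀ i j : Fin n, ((ω (τ⁻¹ i) : Fin n) : ℕ) = ((ω (τ⁻¹ j) : Fin n) : ℕ) → i = j := by
    intro i j hc
    have h' : τ⁻¹ i = τ⁻¹ j := ω.injective (Fin.ext hc)
    have := congrArg τ h'
    rwa [Equiv.Perm.apply_inv_self, Equiv.Perm.apply_inv_self] at this
  refine ⟨ω * τ⁻¹, τ, ⟨?_, ?_⟩, ?_, ?_⟩
  · intro i j hij hj
    simp only [Equiv.Perm.mul_apply]
    have hpi : ((τ⁻¹ i : Fin n) : ℕ) < n1 := (hτinvblock i).mpr (lt_trans hij hj)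
    have hpj : ((τ⁻¹ j : Fin n) : ℕ) < n1 := (hτinvblock j).mpr hj
    rcases lt_trichotomy ((ω (τ⁻¹ i) : Fin n) : ℕ) ((ω (τ⁻¹ j) : Fin n) : ℕ) with hc | hc | hc
    · exact hc
    · have := hinvinj i j hc
      subst this
      omega
    · have h2 := hmono1 _ _ hpj hpi hc
      rw [hrinv, hrinv] at h2
      omega
  · intro i j hij hi
    simp only [Equiv.Perm.mul_apply]
    have hpi : n1 ≤ ((τ⁻¹ i : Fin n) : ℕ) := le_of_not_gt fun h => by
      have := (hτinvblock i).mp h; omega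
    have hpj : n1 ≤ ((τ⁻¹ j : Fin n) : ℕ) := le_of_not_gt fun h => by
      have := (hτinvblock j).mp h; omega
    rcases lt_trichotomy ((ω (τ⁻¹ i) : Fin n) : ℕ) ((ω (τ⁻¹ j) : Fin n) : ℕ) with hc | hc | hc
    · exact hc
    · have := hinvinj i j hc
      subst this
      omega
    · have h2 := hmono2 _ _ hpj hpi hc
      rw [hrinv, hrinv] at h2
      omega
  · intro i
    exact hτblock i
  · exact (inv_mul_cancel_right ω τ).symm

end Aux2
section Aux3

open Finset
open scoped Classical

variable {n n1 : ℕ}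

lemma shuffle_eq_of_image_eq (hn1 : n1 ≤ n) {σ₁ σ₂ : Equiv.Perm (Fin n)}
    (h1 : IsShuffle n1 σ₁) (h2 : IsShuffle n1 σ₂)
    (him : ((univ : Finset (Fin n)).filter fun q : Fin n => (q : ℕ) < n1).image σ₁
         = ((univ : Finset (Fin n)).filter fun q : Fin n => (q : ℕ) < n1).image σ₂) :
    σ₁ = σ₂ := by
  set B1 := ((univ : Finset (Fin n)).filter fun q : Fin n => (q : ℕ) < n1) with hB1
  set S := B1.image σ₁ with hS
  have hcard : S.card = n1 := by
    rw [hS, Finset.card_image_of_injective _ σ₁.injective, hB1, card_block1 hn1]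
  -- first block
  have hmem1 : ∀ x : Fin n1, σ₁ (Fin.castLE hn1 x) ∈ S := by
    intro x
    exact Finset.mem_image_of_mem _ (by simp [hB1, Fin.castLE, x.isLt])
  have hmem2 : ∀ x : Fin n1, σ₂ (Fin.castLE hn1 x) ∈ S := by
    intro x
    rw [him]
    exact Finset.mem_image_of_mem _ (by simp [hB1, Fin.castLE, x.isLt])
  have hsm1 : StrictMono fun x : Fin n1 => σ₁ (Fin.castLE hn1 x) := by
    intro a b hab
    have := h1.1 (Fin.castLE hn1 a) (Fin.castLE hn1 b) hab b.isLt
    exact this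
  have hsm2 : StrictMono fun x : Fin n1 => σ₂ (Fin.castLE hn1 x) := by
    intro a b hab
    exact h2.1 (Fin.castLE hn1 a) (Fin.castLE hn1 b) hab b.isLt
  have heq1 : (fun x : Fin n1 => σ₁ (Fin.castLE hn1 x))
      = (fun x : Fin n1 => σ₂ (Fin.castLE hn1 x)) := by
    rw [Finset.orderEmbOfFin_unique hcard hmem1 hsm1,
        Finset.orderEmbOfFin_unique hcard hmem2 hsm2]
  -- second block
  set S' := (univ : Finset (Fin n)) \ S with hS'
  have hcard' : S'.card = n - n1 := by
    rw [hS', Finset.card_sdiff_of_subset (Finset.subset_univ S), card_univ, Fintype.card_fin, hcard]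
  have hnotmem : ∀ (σ : Equiv.Perm (Fin n)), IsShuffle n1 σ → B1.image σ = S →
      ∀ x : Fin (n - n1), σ ⟨n1 + (x : ℕ), by have := x.isLt; omega⟩ ∈ S' := by
    intro σ hσ hσS x
    rw [hS', Finset.mem_sdiff]
    refine ⟨Finset.mem_univ _, ?_⟩
    intro hmem
    have hmem' : σ (⟨n1 + (x : ℕ), by have := x.isLt; omega⟩ : Fin n) ∈ B1.image σ := by
      rw [hσS]; exact hmem
    rw [Finset.mem_image] at hmem'
    obtain ⟨q, hq, hq2⟩ := hmem'
    rw [hB1, mem_filter] at hq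
    have := σ.injective hq2
    have hqv := congrArg Fin.val this
    simp at hqv
    omega
  have hsm1' : StrictMono fun x : Fin (n - n1) =>
      σ₁ (⟨n1 + (x : ℕ), by have := x.isLt; omega⟩ : Fin n) := by
    intro a b hab
    exact h1.2 _ _ (by simpa using hab) (by simp)
  have hsm2' : StrictMono fun x : Fin (n - n1) =>
      σ₂ (⟨n1 + (x : ℕ), by have := x.isLt; omega⟩ : Fin n) := by
    intro a b hab
    exact h2.2 _ _ (by simpa using hab) (by simp)
  have heq2 : (fun x : Fin (n - n1) => σ₁ (⟨n1 + (x : ℕ), by have := x.isLt; omega⟩ : Fin n))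
      = (fun x : Fin (n - n1) => σ₂ (⟨n1 + (x : ℕ), by have := x.isLt; omega⟩ : Fin n)) := by
    rw [Finset.orderEmbOfFin_unique hcard' (hnotmem σ₁ h1 rfl) hsm1',
        Finset.orderEmbOfFin_unique hcard' (hnotmem σ₂ h2 him.symm) hsm2']
  -- conclude
  ext p
  rcases lt_or_ge ((p : Fin n) : ℕ) n1 with hp | hp
  · have := congrFun heq1 ⟨(p : ℕ), hp⟩
    simpa [Fin.castLE, Fin.ext_iff] using congrArg Fin.val this
  · have hlt : (p : ℕ) - n1 < n - n1 := by have := p.isLt; omega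
    have := congrFun heq2 ⟨(p : ℕ) - n1, hlt⟩
    have hpe : (⟨n1 + ((p : ℕ) - n1), by omega⟩ : Fin n) = p := by
      apply Fin.ext; simp; omega
    rw [hpe] at this
    exact congrArg Fin.val this

lemma block_image_eq (hn1 : n1 ≤ n) {τ : Equiv.Perm (Fin n)} (hτ : IsBlock n1 τ) :
    ((univ : Finset (Fin n)).filter fun q : Fin n => (q : ℕ) < n1).image τ
      = ((univ : Finset (Fin n)).filter fun q : Fin n => (q : ℕ) < n1) := by
  apply Finset.eq_of_subset_of_card_le
  · intro x hx
    rw [Finset.mem_image] at hx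
    obtain ⟨q, hq, rfl⟩ := hx
    rw [mem_filter] at hq ⊢
    exact ⟨mem_univ _, (hτ q).mpr hq.2⟩
  · rw [Finset.card_image_of_injective _ τ.injective]

lemma decomp_unique (hn1 : n1 ≤ n) {σ₁ τ₁ σ₂ τ₂ : Equiv.Perm (Fin n)}
    (hs1 : IsShuffle n1 σ₁) (hb1 : IsBlock n1 τ₁) (hs2 : IsShuffle n1 σ₂) (hb2 : IsBlock n1 τ₂)
    (h : σ₁ * τ₁ = σ₂ * τ₂) : σ₁ = σ₂ ∧ τ₁ = τ₂ := by
  have him : ((univ : Finset (Fin n)).filter fun q : Fin n => (q : ℕ) < n1).image σ₁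
      = ((univ : Finset (Fin n)).filter fun q : Fin n => (q : ℕ) < n1).image σ₂ := by
    have h1 : ((univ : Finset (Fin n)).filter fun q : Fin n => (q : ℕ) < n1).image (σ₁ * τ₁)
        = ((univ : Finset (Fin n)).filter fun q : Fin n => (q : ℕ) < n1).image (σ₂ * τ₂) := by
      rw [h]
    have e1 : ∀ (σ τ : Equiv.Perm (Fin n)),
        ((univ : Finset (Fin n)).filter fun q : Fin n => (q : ℕ) < n1).image (σ * τ)
        = (((univ : Finset (Fin n)).filter fun q : Fin n => (q : ℕ) < n1).image τ).image σ := by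
      intro σ τ
      rw [Finset.image_image]
      rfl
    rw [e1, e1, block_image_eq hn1 hb1, block_image_eq hn1 hb2] at h1
    exact h1
  have hσ : σ₁ = σ₂ := shuffle_eq_of_image_eq hn1 hs1 hs2 him
  refine ⟨hσ, ?_⟩
  rw [hσ] at h
  exact mul_left_cancel h

end Aux3
section Aux4

open Finset
open scoped Classical

variable {n n1 : ℕ}

lemma invCount_mul_of (hn1 : n1 ≤ n) {σ τ : Equiv.Perm (Fin n)}
    (hσ : IsShuffle n1 σ) (hτ : IsBlock n1 τ) :
    invCount (σ * τ) = invCount σ + invCount τ := by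
  have smono : ∀ a b : Fin n, (a : ℕ) < (b : ℕ) → ((b : ℕ) < n1 ∨ n1 ≤ (a : ℕ)) →
      ((σ a : Fin n) : ℕ) < ((σ b : Fin n) : ℕ) := by
    intro a b hab h
    rcases h with h | h
    · exact hσ.1 a b hab h
    · exact hσ.2 a b hab h
  have siff : ∀ a b : Fin n, (((a : ℕ) < n1 ∧ (b : ℕ) < n1) ∨ (n1 ≤ (a : ℕ) ∧ n1 ≤ (b : ℕ))) →
      (((σ a : Fin n) : ℕ) < ((σ b : Fin n) : ℕ) ↔ (a : ℕ) < (b : ℕ)) := by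
    intro a b hblk
    constructor
    · intro h
      by_contra hh
      push_neg at hh
      rcases lt_or_eq_of_le hh with hc | hc
      · have := smono b a hc (by omega)
        omega
      · have : a = b := Fin.ext hc.symm
        subst this
        omega
    · intro h
      exact smono a b h (by omega)
  unfold invCount
  have hsplit := Finset.card_filter_add_card_filter_not
    (s := (univ : Finset (Fin n × Fin n)).filter fun p : Fin n × Fin n =>
      p.1 < p.2 ∧ (σ * τ) p.2 < (σ * τ) p.1)
    (p := fun p : Fin n × Fin n => (p.1 : ℕ) < n1 ∧ n1 ≤ (p.2 : ℕ))
  -- the non-cross part equals inversions of τ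
  have hclaim1 : (((univ : Finset (Fin n × Fin n)).filter fun p : Fin n × Fin n =>
        p.1 < p.2 ∧ (σ * τ) p.2 < (σ * τ) p.1).filter
        fun p : Fin n × Fin n => ¬((p.1 : ℕ) < n1 ∧ n1 ≤ (p.2 : ℕ)))
      = ((univ : Finset (Fin n × Fin n)).filter fun p : Fin n × Fin n =>
        p.1 < p.2 ∧ τ p.2 < τ p.1) := by
    ext p
    obtain ⟨p1, p2⟩ := p
    simp only [Finset.mem_filter, Finset.mem_univ, true_and, Equiv.Perm.mul_apply, Fin.lt_def]
    have hbv1 := hτ p1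
    have hbv2 := hτ p2
    constructor
    · rintro ⟨⟨h12, hinv⟩, hnc⟩
      refine ⟨h12, ?_⟩
      have hblk : (((τ p2 : Fin n) : ℕ) < n1 ∧ ((τ p1 : Fin n) : ℕ) < n1) ∨
          (n1 ≤ ((τ p2 : Fin n) : ℕ) ∧ n1 ≤ ((τ p1 : Fin n) : ℕ)) := by omega
      have := siff (τ p2) (τ p1) hblk
      omega
    · rintro ⟨h12, hinv⟩
      have hblk : (((τ p2 : Fin n) : ℕ) < n1 ∧ ((τ p1 : Fin n) : ℕ) < n1) ∨
          (n1 ≤ ((τ p2 : Fin n) : ℕ) ∧ n1 ≤ ((τ p1 : Fin n) : ℕ)) := by omega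
      have := (siff (τ p2) (τ p1) hblk).mpr hinv
      refine ⟨⟨h12, this⟩, by omega⟩
  -- the cross part is in bijection with inversions of σ
  have hclaim2 : (((univ : Finset (Fin n × Fin n)).filter fun p : Fin n × Fin n =>
        p.1 < p.2 ∧ (σ * τ) p.2 < (σ * τ) p.1).filter
        fun p : Fin n × Fin n => (p.1 : ℕ) < n1 ∧ n1 ≤ (p.2 : ℕ)).card
      = ((univ : Finset (Fin n × Fin n)).filter fun p : Fin n × Fin n =>
        p.1 < p.2 ∧ σ p.2 < σ p.1).card := by
    apply Finset.card_nbij' (i := fun p : Fin n × Fin n => (τ p.1, τ p.2))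
      (j := fun q : Fin n × Fin n => (τ⁻¹ q.1, τ⁻¹ q.2))
    · rintro ⟨p1, p2⟩ hp
      simp only [Finset.mem_coe, Finset.mem_filter, Finset.mem_univ, true_and, Equiv.Perm.mul_apply,
        Fin.lt_def] at hp ⊢
      obtain ⟨⟨h12, hinv⟩, hc1, hc2⟩ := hp
      have hbv1 := hτ p1
      have hbv2 := hτ p2
      exact ⟨by omega, hinv⟩
    · rintro ⟨q1, q2⟩ hq
      simp only [Finset.mem_coe, Finset.mem_filter, Finset.mem_univ, true_and, Equiv.Perm.mul_apply,
        Fin.lt_def, Equiv.Perm.apply_inv_self] at hq ⊢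
      obtain ⟨h12, hinv⟩ := hq
      have hcross : (q1 : ℕ) < n1 ∧ n1 ≤ (q2 : ℕ) := by
        by_contra hh
        have hblk : (((q2 : Fin n) : ℕ) < n1 ∧ ((q1 : Fin n) : ℕ) < n1) ∨
            (n1 ≤ ((q2 : Fin n) : ℕ) ∧ n1 ≤ ((q1 : Fin n) : ℕ)) := by omega
        have := (siff q2 q1 hblk).mp hinv
        omega
      have hbv1 := (IsBlock.inv hτ) q1
      have hbv2 := (IsBlock.inv hτ) q2
      exact ⟨⟨by omega, hinv⟩, by omega⟩
    · rintro ⟨p1, p2⟩ _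
      simp
    · rintro ⟨q1, q2⟩ _
      simp
  rw [hclaim1, hclaim2] at hsplit
  omega

lemma invCount_mul_of' (hn1 : n1 ≤ n) {τ σ : Equiv.Perm (Fin n)}
    (hτ : IsBlock n1 τ) (hσ : IsShuffle n1 σ⁻¹) :
    invCount (τ * σ) = invCount τ + invCount σ := by
  have h1 : (τ * σ)⁻¹ = σ⁻¹ * τ⁻¹ := mul_inv_rev τ σ
  have h2 := invCount_mul_of hn1 hσ (IsBlock.inv hτ)
  rw [← invCount_inv (τ * σ), h1, h2, invCount_inv, invCount_inv]
  omega

end Aux4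
section Aux5

open Finset
open scoped Classical

variable {n n1 : ℕ}

lemma sum_decomp {M : Type*} [AddCommMonoid M] (hn1 : n1 ≤ n) (f : Equiv.Perm (Fin n) → M) :
    ∑ ω : Equiv.Perm (Fin n), f ω
      = ∑ p ∈ ((univ : Finset (Equiv.Perm (Fin n))).filter fun σ => IsShuffle n1 σ) ×ˢ
          ((univ : Finset (Equiv.Perm (Fin n))).filter fun τ => IsBlock n1 τ),
          f (p.1 * p.2) := by
  symm
  apply Finset.sum_bij (i := fun p _ => p.1 * p.2)
  · intro a _
    exact mem_univ _
  · rintro ⟨σ₁, τ₁⟩ h1 ⟨σ₂, τ₂⟩ h2 h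
    simp only [Finset.mem_product, Finset.mem_filter, Finset.mem_univ, true_and] at h1 h2
    obtain ⟨hs, ht⟩ := decomp_unique hn1 h1.1 h1.2 h2.1 h2.2 h
    simp only [Prod.mk.injEq]
    exact ⟨hs, ht⟩
  · intro ω _
    obtain ⟨σ, τ, hs, ht, rfl⟩ := exists_decomp hn1 ω
    refine ⟨(σ, τ), ?_, rfl⟩
    simp only [Finset.mem_product, Finset.mem_filter, Finset.mem_univ, true_and]
    exact ⟨hs, ht⟩
  · intro a _
    rfl

lemma sum_decomp' {M : Type*} [AddCommMonoid M] (hn1 : n1 ≤ n) (f : Equiv.Perm (Fin n) → M) :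
    ∑ ω : Equiv.Perm (Fin n), f ω
      = ∑ p ∈ ((univ : Finset (Equiv.Perm (Fin n))).filter fun τ => IsBlock n1 τ) ×ˢ
          ((univ : Finset (Equiv.Perm (Fin n))).filter fun ω => IsShuffle n1 ω⁻¹),
          f (p.1 * p.2) := by
  symm
  apply Finset.sum_bij (i := fun p _ => p.1 * p.2)
  · intro a _
    exact mem_univ _
  · rintro ⟨τ₁, σ₁⟩ h1 ⟨τ₂, σ₂⟩ h2 h
    simp only [Finset.mem_product, Finset.mem_filter, Finset.mem_univ, true_and] at h1 h2
    have h' : σ₁⁻¹ * τ₁⁻¹ = σ₂⁻¹ * τ₂⁻¹ := by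
      rw [← mul_inv_rev, ← mul_inv_rev, h]
    obtain ⟨hs, ht⟩ := decomp_unique hn1 h1.2 (IsBlock.inv h1.1) h2.2 (IsBlock.inv h2.1) h'
    simp only [Prod.mk.injEq]
    exact ⟨inv_injective ht, inv_injective hs⟩
  · intro ω _
    obtain ⟨σ, τ, hs, ht, hd⟩ := exists_decomp hn1 ω⁻¹
    refine ⟨(τ⁻¹, σ⁻¹), ?_, ?_⟩
    · simp only [Finset.mem_product, Finset.mem_filter, Finset.mem_univ, true_and]
      refine ⟨IsBlock.inv ht, ?_⟩
      rw [inv_inv]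
      exact hs
    · rw [← mul_inv_rev, ← hd, inv_inv]
  · intro a _
    rfl

end Aux5

open scoped Classical in
theorem total_symmetrizer_factorization
    (K : Type) [CommRing K] (n n1 n2 : ℕ) (hn : n = n1 + n2)
    -- the Matsumoto section `T : 𝔖_n → 𝔅_n`
    (T : Equiv.Perm (Fin n) → BraidGroup (n - 1))
    (hTgen : ∀ (i j : Fin n) (hij : (i : ℕ) + 1 = (j : ℕ)),
      T (Equiv.swap i j) =
        PresentedGroup.of (⟨(i : ℕ), by have := j.isLt; omega⟩ : Fin (n - 1)))
    -- `T` is multiplicative on length-additive products (Matsumoto's property)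
    (hTmul : ∀ τ σ : Equiv.Perm (Fin n),
      invCount (τ * σ) = invCount τ + invCount σ → T (τ * σ) = T τ * T σ) :
    -- (1) factorization `Σ_n = Σ_{𝔖_{n₁} × 𝔖_{n₂}} · Σ_{𝔖_{n₁,n₂}}` in `K[𝔅_n]`
    ((∑ ω : Equiv.Perm (Fin n), MonoidAlgebra.single (T ω) (1 : K)) =
      (∑ τ ∈ Finset.univ.filter
          (fun τ : Equiv.Perm (Fin n) => ∀ i : Fin n, ((τ i : ℕ) < n1 ↔ (i : ℕ) < n1)),
        MonoidAlgebra.single (T τ) (1 : K)) *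
      (∑ σ ∈ Finset.univ.filter
          (fun ω : Equiv.Perm (Fin n) =>
            (∀ i j : Fin n, (i : ℕ) < (j : ℕ) → (j : ℕ) < n1 →
              ((ω⁻¹ i : Fin n) : ℕ) < ((ω⁻¹ j : Fin n) : ℕ)) ∧
            (∀ i j : Fin n, (i : ℕ) < (j : ℕ) → n1 ≤ (i : ℕ) →
              ((ω⁻¹ i : Fin n) : ℕ) < ((ω⁻¹ j : Fin n) : ℕ))),
        MonoidAlgebra.single (T σ) (1 : K))) ∧
    -- (2) for any representation of `𝔅_n` (e.g. on `W^{⊗ n}` for a braided vector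
    -- space `(W, σ̃)`): shuffle-symmetrization kills `x` ⟹ total symmetrization kills `x`
    (∀ (W : Type) (_ : AddCommGroup W) (_ : Module K W)
      (ρ : BraidGroup (n - 1) →* Module.End K W) (x : W),
      (∑ σ ∈ Finset.univ.filter
          (fun ω : Equiv.Perm (Fin n) =>
            (∀ i j : Fin n, (i : ℕ) < (j : ℕ) → (j : ℕ) < n1 →
              ((ω⁻¹ i : Fin n) : ℕ) < ((ω⁻¹ j : Fin n) : ℕ)) ∧
            (∀ i j : Fin n, (i : ℕ) < (j : ℕ) → n1 ≤ (i : ℕ) →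
              ((ω⁻¹ i : Fin n) : ℕ) < ((ω⁻¹ j : Fin n) : ℕ))),
        ρ (T σ)) x = 0 →
      (∑ ω : Equiv.Perm (Fin n), ρ (T ω)) x = 0) ∧
    -- (3) in particular `ker S₁ ⊆ ker S₂` for the component-wise symmetrizer `S₁`
    -- and the total symmetrizer `S₂`, and the multiplication induces a surjection
    -- `S_σ̃(W)_{(1)} ⊗_{S_σ(V)} S_σ̃(W)_{(1)} → S_σ̃(W)_{(2)}`
    (∀ (W : Type) (_ : AddCommGroup W) (_ : Module K W)
      (ρ : BraidGroup (n - 1) →* Module.End K W),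
      LinearMap.ker
          (∑ τ ∈ Finset.univ.filter
            (fun τ : Equiv.Perm (Fin n) => ∀ i : Fin n, ((τ i : ℕ) < n1 ↔ (i : ℕ) < n1)),
            ρ (T τ)) ≤
        LinearMap.ker (∑ ω : Equiv.Perm (Fin n), ρ (T ω)) ∧
      ∃ f : LinearMap.range
            (∑ τ ∈ Finset.univ.filter
              (fun τ : Equiv.Perm (Fin n) => ∀ i : Fin n, ((τ i : ℕ) < n1 ↔ (i : ℕ) < n1)),
              ρ (T τ)) →ₗ[K]
          LinearMap.range (∑ ω : Equiv.Perm (Fin n), ρ (T ω)),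
        Function.Surjective f ∧
        ∀ x : W,
          f ⟨(∑ τ ∈ Finset.univ.filter
              (fun τ : Equiv.Perm (Fin n) => ∀ i : Fin n, ((τ i : ℕ) < n1 ↔ (i : ℕ) < n1)),
              ρ (T τ)) x, LinearMap.mem_range_self _ x⟩ =
            ⟨(∑ ω : Equiv.Perm (Fin n), ρ (T ω)) x, LinearMap.mem_range_self _ x⟩) := by
  have hn1 : n1 ≤ n := by omega
  -- identify the two filters of the statement with the ones used in the auxiliary lemmas
  have hA : (Finset.univ.filter
        (fun τ : Equiv.Perm (Fin n) => ∀ i : Fin n, ((τ i : ℕ) < n1 ↔ (i : ℕ) < n1)))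
      = ((Finset.univ : Finset (Equiv.Perm (Fin n))).filter fun τ => IsBlock n1 τ) :=
    Finset.filter_congr fun _ _ => Iff.rfl
  have hB : (Finset.univ.filter
        (fun ω : Equiv.Perm (Fin n) =>
          (∀ i j : Fin n, (i : ℕ) < (j : ℕ) → (j : ℕ) < n1 →
            ((ω⁻¹ i : Fin n) : ℕ) < ((ω⁻¹ j : Fin n) : ℕ)) ∧
          (∀ i j : Fin n, (i : ℕ) < (j : ℕ) → n1 ≤ (i : ℕ) →
            ((ω⁻¹ i : Fin n) : ℕ) < ((ω⁻¹ j : Fin n) : ℕ))))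
      = ((Finset.univ : Finset (Equiv.Perm (Fin n))).filter fun ω => IsShuffle n1 ω⁻¹) :=
    Finset.filter_congr fun _ _ => Iff.rfl
  refine ⟨?_, ?_, ?_⟩
  · -- part (1)
    rw [hA, hB, sum_decomp' hn1 (fun ω => MonoidAlgebra.single (T ω) (1 : K)),
      Finset.sum_product, Finset.sum_mul_sum]
    refine Finset.sum_congr rfl fun τ hτ => Finset.sum_congr rfl fun σ hσ => ?_
    rw [Finset.mem_filter] at hτ hσ
    rw [MonoidAlgebra.single_mul_single, one_mul,
      hTmul τ σ (invCount_mul_of' hn1 hτ.2 hσ.2)]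
  · -- part (2)
    intro W _ _ ρ x hx
    rw [hB] at hx
    have key : (∑ ω : Equiv.Perm (Fin n), ρ (T ω))
        = (∑ τ ∈ (Finset.univ : Finset (Equiv.Perm (Fin n))).filter fun τ => IsBlock n1 τ, ρ (T τ)) *
          (∑ σ ∈ (Finset.univ : Finset (Equiv.Perm (Fin n))).filter fun ω => IsShuffle n1 ω⁻¹,
            ρ (T σ)) := by
      rw [sum_decomp' hn1 (fun ω => ρ (T ω)), Finset.sum_product, Finset.sum_mul_sum]
      refine Finset.sum_congr rfl fun τ hτ => Finset.sum_congr rfl fun σ hσ => ?_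
      rw [Finset.mem_filter] at hτ hσ
      rw [hTmul τ σ (invCount_mul_of' hn1 hτ.2 hσ.2), map_mul]
    rw [key, Module.End.mul_apply, hx, map_zero]
  · -- part (3)
    intro W _ _ ρ
    rw [hA]
    set A : Module.End K W :=
      ∑ τ ∈ (Finset.univ : Finset (Equiv.Perm (Fin n))).filter fun τ => IsBlock n1 τ, ρ (T τ) with hAdef
    set C : Module.End K W :=
      ∑ σ ∈ (Finset.univ : Finset (Equiv.Perm (Fin n))).filter fun σ => IsShuffle n1 σ, ρ (T σ)
      with hCdef
    set S : Module.End K W := ∑ ω : Equiv.Perm (Fin n), ρ (T ω) with hSdef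
    have key : S = C * A := by
      rw [hSdef, hCdef, hAdef, sum_decomp hn1 (fun ω => ρ (T ω)), Finset.sum_product,
        Finset.sum_mul_sum]
      refine Finset.sum_congr rfl fun σ hσ => Finset.sum_congr rfl fun τ hτ => ?_
      rw [Finset.mem_filter] at hτ hσ
      rw [hTmul σ τ (invCount_mul_of hn1 hσ.2 hτ.2), map_mul]
    have hSx : ∀ x : W, S x = C (A x) := by
      intro x
      rw [key, Module.End.mul_apply]
    constructor
    · intro x hx
      rw [LinearMap.mem_ker] at hx ⊢
      rw [hSx x, hx, map_zero]
    · refine ⟨LinearMap.codRestrict _ (C ∘ₗ (LinearMap.range A).subtype) ?_, ?_, ?_⟩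
      · rintro ⟨y, hy⟩
        obtain ⟨x, hx⟩ := hy
        refine ⟨x, ?_⟩
        simp only [LinearMap.coe_comp, Function.comp_apply, Submodule.coe_subtype]
        rw [hSx x, hx]
      · rintro ⟨z, hz⟩
        obtain ⟨x, hx⟩ := hz
        refine ⟨⟨A x, LinearMap.mem_range_self _ x⟩, ?_⟩
        apply Subtype.ext
        simp only [LinearMap.codRestrict_apply, LinearMap.coe_comp, Function.comp_apply,
          Submodule.coe_subtype]
        rw [← hSx x, hx]
      · intro x
        apply Subtype.ext
        simp only [LinearMap.codRestrict_apply, LinearMap.coe_comp, Function.comp_apply,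
          Submodule.coe_subtype]
        rw [hSx x]


end Stmt14
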